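/- Let $f \in L_\infty(\mathbb{R}^d)$, $Q$ a dyadic cube of side length $\ell(Q)$ with center $c_Q$, and $f_2 = f\mathbf{1}_{\mathbb{R}^d\setminus 3Q}$. Define $F_k(x) = (M_k f_2(x) - \mathsf{E}_k f_2(x)) - (M_k f_2(c_Q) - \mathsf{E}_k f_2(c_Q))$. Then for all $x \in Q$, $\sum_{k \in \mathbb{Z}} |F_k(x)|^2 \le C_d \|f\|_\infty^2$, i.e., the square function of the differences is uniformly bounded on $Q$. -/

import Mathlib

open MeasureTheory Metric

noncomputable section

/-- Euclidean space `ℝ^d`. -/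
abbrev Euc (d : ℕ) := EuclideanSpace ℝ (Fin d)

/-- The standard dyadic cube at scale `n` (side length `2^{-n}`) indexed by `m`. -/
def dyadicCube (d : ℕ) (n : ℤ) (m : Fin d → ℤ) : Set (Euc d) :=
  {y | ∀ j, (m j : ℝ) * 2 ^ (-n) ≤ y j ∧ y j < ((m j : ℝ) + 1) * 2 ^ (-n)}

/-- Index of the dyadic cube at scale `n` containing `x`. -/
def dyadicIdx (d : ℕ) (n : ℤ) (x : Euc d) : Fin d → ℤ :=
  fun j => ⌊(2 : ℝ) ^ n * x j⌋

/-- Dyadic conditional expectation at scale `2^{-n}`. -/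
def Ek (d : ℕ) (n : ℤ) (h : Euc d → ℝ) (x : Euc d) : ℝ :=
  (2 : ℝ) ^ (n * d) * ∫ y in dyadicCube d n (dyadicIdx d n x), h y

/-- Average over the Euclidean ball of radius `2^{-k}` centered at `x`. -/
def Mk (d : ℕ) (k : ℤ) (h : Euc d → ℝ) (x : Euc d) : ℝ :=
  ((volume (ball (0 : Euc d) ((2 : ℝ) ^ (-k)))).toReal)⁻¹ *
    ∫ y in ball x ((2 : ℝ) ^ (-k)), h y

/-- Indices of dyadic cubes at scale `n` meeting the boundary of the ball `B(x, 2^{-k})`. -/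
def bdryIdx (d : ℕ) (k n : ℤ) (x : Euc d) : Set (Fin d → ℤ) :=
  {m | (dyadicCube d n m ∩ frontier (ball x ((2 : ℝ) ^ (-k)))).Nonempty}

/-- `𝓘(B_k + x, n)`: union over boundary cubes `Q` at scale `n` of `Q ∩ B(x,2^{-k})`. -/
def Ikn (d : ℕ) (k n : ℤ) (x : Euc d) : Set (Euc d) :=
  ⋃ m ∈ bdryIdx d k n x, dyadicCube d n m ∩ ball x ((2 : ℝ) ^ (-k))

/-- The operator `M_{k,n}`. -/
def Mkn (d : ℕ) (k n : ℤ) (h : Euc d → ℝ) (x : Euc d) : ℝ :=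
  ((volume (ball (0 : Euc d) ((2 : ℝ) ^ (-k)))).toReal)⁻¹ * ∫ y in Ikn d k n x, h y

/-- The concentric dilation `iQ` of the dyadic cube at scale `n` indexed by `m`. -/
def cubeDil (d : ℕ) (i : ℕ) (n : ℤ) (m : Fin d → ℤ) : Set (Euc d) :=
  {y | ∀ j, ((m j : ℝ) + 1 / 2) * 2 ^ (-n) - (i : ℝ) * 2 ^ (-n) / 2 ≤ y j ∧
      y j < ((m j : ℝ) + 1 / 2) * 2 ^ (-n) + (i : ℝ) * 2 ^ (-n) / 2}

open scoped ENNReal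

-- coordinate bound

lemma coord_abs_le_norm {d : ℕ} (v : Euc d) (j : Fin d) : |v j| ≤ ‖v‖ := by
  rw [EuclideanSpace.norm_eq, ← Real.sqrt_sq_eq_abs]
  apply Real.sqrt_le_sqrt
  have := Finset.single_le_sum (f := fun i => ‖v i‖ ^ 2) (fun i _ => sq_nonneg _)
    (Finset.mem_univ j)
  simpa [Real.norm_eq_abs, sq_abs] using this

-- a^(n+1) - b^(n+1) ≤ (n+1) a^n (a-b)
lemma pow_sub_pow_le' (a b : ℝ) (hb : 0 ≤ b) (hba : b ≤ a) :
    ∀ n : ℕ, a ^ (n + 1) - b ^ (n + 1) ≤ (n + 1 : ℝ) * a ^ n * (a - b)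
  | 0 => by simp
  | (n + 1) => by
    have ih := pow_sub_pow_le' a b hb hba n
    have h1 : b ^ (n + 1) ≤ a ^ (n + 1) := pow_le_pow_left₀ hb hba _
    have ha : 0 ≤ a := hb.trans hba
    have e1 : a ^ (n + 2) = a * a ^ (n + 1) := by ring
    have e2 : b ^ (n + 2) = b * b ^ (n + 1) := by ring
    have e3 : a * a ^ n = a ^ (n + 1) := by ring
    have key := mul_le_mul_of_nonneg_left ih ha
    have key2 := mul_le_mul_of_nonneg_right h1 (sub_nonneg.2 hba)
    have e4 : a * ((↑n + 1) * a ^ n * (a - b)) = (↑n + 1) * a ^ (n + 1) * (a - b) := by ring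
    push_cast
    nlinarith [key, key2]

-- floor lemma
lemma floor_div_pow_eq {t : ℕ} {p : ℤ} {w : ℝ} (h1 : (p : ℝ) ≤ w) (h2 : w < (p : ℝ) + 1) :
    ⌊w / 2 ^ t⌋ = ⌊(p : ℝ) / 2 ^ t⌋ := by
  have ht : (0 : ℝ) < 2 ^ t := by positivity
  set q := ⌊(p : ℝ) / 2 ^ t⌋ with hq
  have hq1 : (q : ℝ) ≤ (p : ℝ) / 2 ^ t := Int.floor_le _
  have hq2 : (p : ℝ) / 2 ^ t < q + 1 := Int.lt_floor_add_one _
  have hp2 : (p : ℝ) < (q + 1) * 2 ^ t := by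
    rw [div_lt_iff₀ ht] at hq2; linarith
  have hint : p + 1 ≤ (q + 1) * 2 ^ t := by
    have : (p : ℝ) < (((q + 1) * 2 ^ t : ℤ) : ℝ) := by push_cast; linarith
    exact_mod_cast Int.add_one_le_of_lt (by exact_mod_cast this)
  rw [Int.floor_eq_iff]
  constructor
  · calc (q : ℝ) ≤ (p : ℝ) / 2 ^ t := hq1
      _ ≤ w / 2 ^ t := by gcongr
  · rw [div_lt_iff₀ ht]
    have : ((p : ℝ) + 1) ≤ ((q : ℝ) + 1) * 2 ^ t := by exact_mod_cast hint
    linarith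


lemma Mk_diff_bound {d : ℕ} (hd : 0 < d) (h : Euc d → ℝ) (hm : AEStronglyMeasurable h volume)
    {M : ℝ} (hM : 0 ≤ M) (hb : ∀ᵐ y, ‖h y‖ ≤ M) (k : ℤ) (x c : Euc d) :
    |Mk d k h x - Mk d k h c| ≤ 2 * d * M * ‖x - c‖ * 2 ^ k := by
  obtain ⟨d', rfl⟩ : ∃ d', d = d' + 1 := ⟨d - 1, (Nat.succ_pred_eq_of_pos hd).symm⟩
  haveI : Nontrivial (Euc (d' + 1)) := by
    refine ⟨0, EuclideanSpace.single (⟨0, hd⟩ : Fin (d' + 1)) 1, fun hcon => ?_⟩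
    have := congrArg (fun v : Euc (d' + 1) => v (⟨0, hd⟩ : Fin (d' + 1))) hcon
    simp [EuclideanSpace.single_apply] at this
  set r : ℝ := (2 : ℝ) ^ (-k) with hrdef
  have hr : 0 < r := zpow_pos two_pos _
  set δ : ℝ := ‖x - c‖ with hδdef
  have hδ : 0 ≤ δ := norm_nonneg _
  set s : ℝ := max (r - δ) 0 with hsdef
  have hs : 0 ≤ s := le_max_right _ _
  have hsr : s ≤ r := max_le (by linarith) hr.le
  have hrs : r - s ≤ δ := by
    have := le_max_left (r - δ) 0
    linarith
  have hCA : ball x s ⊆ ball x r := ball_subset_ball hsr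
  have hCB : ball x s ⊆ ball c r := by
    rcases le_or_gt δ r with hcase | hcase
    · apply ball_subset_ball'
      have h1 : dist x c = δ := by rw [hδdef, dist_eq_norm]
      have h2 : s = r - δ := max_eq_left (by linarith)
      rw [h1, h2]
      linarith
    · have : s = 0 := max_eq_right (by linarith)
      rw [this, ball_eq_empty.2 le_rfl]
      exact Set.empty_subset _
  -- integrability
  have hint : ∀ u : Set (Euc (d' + 1)), volume u ≠ ⊤ → IntegrableOn h u volume := fun u hu =>
    Measure.integrableOn_of_bounded hu hm (ae_restrict_of_ae hb)
  have hballA : volume (ball x r) ≠ ⊤ := measure_ball_lt_top.ne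
  have hballB : volume (ball c r) ≠ ⊤ := measure_ball_lt_top.ne
  have hballC : volume (ball x s) ≠ ⊤ := measure_ball_lt_top.ne
  have hdiffA : ∫ y in ball x r \ ball x s, h y =
      (∫ y in ball x r, h y) - ∫ y in ball x s, h y :=
    integral_diff measurableSet_ball (hint _ hballA) hCA
  have hdiffB : ∫ y in ball c r \ ball x s, h y =
      (∫ y in ball c r, h y) - ∫ y in ball x s, h y :=
    integral_diff measurableSet_ball (hint _ hballB) hCB
  -- volumes
  set c1 : ℝ := (volume (ball (0 : Euc (d' + 1)) 1)).toReal with hc1def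
  have hc1 : 0 < c1 := ENNReal.toReal_pos (measure_ball_pos volume 0 one_pos).ne'
    measure_ball_lt_top.ne
  have hvol : ∀ (z : Euc (d' + 1)) (ρ : ℝ), 0 ≤ ρ →
      (volume (ball z ρ)).toReal = ρ ^ (d' + 1) * c1 := by
    intro z ρ hρ
    rw [Measure.addHaar_ball volume z hρ, finrank_euclideanSpace_fin, ENNReal.toReal_mul,
      ENNReal.toReal_ofReal (by positivity)]
  have hvolAC : (volume (ball x r \ ball x s)).toReal = r ^ (d' + 1) * c1 - s ^ (d' + 1) * c1 := by
    rw [measure_diff hCA measurableSet_ball.nullMeasurableSet hballC,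
      ENNReal.toReal_sub_of_le (measure_mono hCA) hballA, hvol x r hr.le, hvol x s hs]
  have hvolBC : (volume (ball c r \ ball x s)).toReal = r ^ (d' + 1) * c1 - s ^ (d' + 1) * c1 := by
    rw [measure_diff hCB measurableSet_ball.nullMeasurableSet hballC,
      ENNReal.toReal_sub_of_le (measure_mono hCB) hballB, hvol c r hr.le, hvol x s hs]
  -- bound integrals over differences
  have hboundA : ‖∫ y in ball x r \ ball x s, h y‖ ≤
      M * (volume (ball x r \ ball x s)).toReal := by
    apply norm_setIntegral_le_of_norm_le_const_ae
      (lt_of_le_of_lt (measure_mono Set.diff_subset) measure_ball_lt_top)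
    exact ae_restrict_of_ae hb
  have hboundB : ‖∫ y in ball c r \ ball x s, h y‖ ≤
      M * (volume (ball c r \ ball x s)).toReal := by
    apply norm_setIntegral_le_of_norm_le_const_ae
      (lt_of_le_of_lt (measure_mono Set.diff_subset) measure_ball_lt_top)
    exact ae_restrict_of_ae hb
  -- the key quantity
  have hvolball : (volume (ball (0 : Euc (d' + 1)) r)).toReal = r ^ (d' + 1) * c1 :=
    hvol 0 r hr.le
  have hvA : (volume (ball x r)).toReal = r ^ (d' + 1) * c1 := hvol x r hr.le
  have hvB : (volume (ball c r)).toReal = r ^ (d' + 1) * c1 := hvol c r hr.le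
  have hMk : Mk (d' + 1) k h x - Mk (d' + 1) k h c =
      (r ^ (d' + 1) * c1)⁻¹ *
        ((∫ y in ball x r \ ball x s, h y) - ∫ y in ball c r \ ball x s, h y) := by
    rw [Mk, Mk, hdiffA, hdiffB, ← hrdef, hvolball]
    ring
  have hkey : r ^ (d' + 1) - s ^ (d' + 1) ≤ (d' + 1 : ℝ) * r ^ d' * δ := by
    have h1 := pow_sub_pow_le' r s hs hsr d'
    have h2 : (d' + 1 : ℝ) * r ^ d' * (r - s) ≤ (d' + 1 : ℝ) * r ^ d' * δ := by
      apply mul_le_mul_of_nonneg_left hrs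
      positivity
    linarith
  have habs : |Mk (d' + 1) k h x - Mk (d' + 1) k h c| ≤
      (r ^ (d' + 1) * c1)⁻¹ * (2 * M * (r ^ (d' + 1) * c1 - s ^ (d' + 1) * c1)) := by
    rw [hMk, abs_mul]
    have hpos : (0:ℝ) ≤ (r ^ (d' + 1) * c1)⁻¹ := by positivity
    rw [abs_of_nonneg hpos]
    apply mul_le_mul_of_nonneg_left _ hpos
    calc |(∫ y in ball x r \ ball x s, h y) - ∫ y in ball c r \ ball x s, h y|
        ≤ ‖∫ y in ball x r \ ball x s, h y‖ + ‖∫ y in ball c r \ ball x s, h y‖ := by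
          rw [Real.norm_eq_abs, Real.norm_eq_abs]; exact abs_sub _ _
      _ ≤ M * (volume (ball x r \ ball x s)).toReal +
            M * (volume (ball c r \ ball x s)).toReal := add_le_add hboundA hboundB
      _ = 2 * M * (r ^ (d' + 1) * c1 - s ^ (d' + 1) * c1) := by rw [hvolAC, hvolBC]; ring
  refine habs.trans ?_
  have hrk : (2 : ℝ) ^ k * r = 1 := by
    rw [hrdef, ← zpow_add₀ (two_ne_zero) k (-k)]
    simp
  have hrpow : r ^ (d' + 1) = r ^ d' * r := by ring
  calc (r ^ (d' + 1) * c1)⁻¹ * (2 * M * (r ^ (d' + 1) * c1 - s ^ (d' + 1) * c1))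
      = 2 * M * ((r ^ (d' + 1) - s ^ (d' + 1)) * c1) * (r ^ (d' + 1) * c1)⁻¹ := by ring
    _ ≤ 2 * M * ((d' + 1 : ℝ) * r ^ d' * δ * c1) * (r ^ (d' + 1) * c1)⁻¹ := by
        apply mul_le_mul_of_nonneg_right _ (by positivity)
        have : (r ^ (d' + 1) - s ^ (d' + 1)) * c1 ≤ (d' + 1 : ℝ) * r ^ d' * δ * c1 :=
          mul_le_mul_of_nonneg_right hkey hc1.le
        nlinarith [this, hM]
    _ = 2 * (d' + 1 : ℝ) * M * δ * (r ^ d' * c1 * (r ^ d' * r * c1)⁻¹) := by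
        rw [hrpow]; ring
    _ = 2 * (d' + 1 : ℝ) * M * δ * r⁻¹ := by
        congr 1
        rw [mul_inv, mul_inv]
        field_simp
    _ = 2 * ((d' : ℝ) + 1) * M * δ * 2 ^ k := by
        rw [hrdef, ← zpow_neg]
        simp
    _ = 2 * ((d' + 1 : ℕ) : ℝ) * M * δ * 2 ^ k := by push_cast; ring

lemma dyadicIdx_eq_of_le {d : ℕ} {n k : ℤ} (hk : k ≤ n) {m : Fin d → ℤ} {x c : Euc d}
    (hx : x ∈ dyadicCube d n m) (hc : ∀ j, c j = ((m j : ℝ) + 1 / 2) * 2 ^ (-n)) :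
    dyadicIdx d k x = dyadicIdx d k c := by
  funext j
  show ⌊(2 : ℝ) ^ k * x j⌋ = ⌊(2 : ℝ) ^ k * c j⌋
  set t : ℕ := (n - k).toNat with htdef
  have ht : (t : ℤ) = n - k := Int.toNat_of_nonneg (by linarith)
  have hsplit : ∀ y : ℝ, (2 : ℝ) ^ k * y = ((2 : ℝ) ^ n * y) / 2 ^ t := by
    intro y
    rw [eq_div_iff (by positivity : ((2:ℝ) ^ t) ≠ 0)]
    have : (2 : ℝ) ^ k * (2 : ℝ) ^ (t : ℤ) = 2 ^ n := by
      rw [← zpow_add₀ (two_ne_zero : (2:ℝ) ≠ 0), ht]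
      congr 1; ring
    rw [← zpow_natCast (2 : ℝ) t] at *
    linear_combination y * this
  have hpown : (2 : ℝ) ^ (-n) * 2 ^ n = 1 := by
    rw [← zpow_add₀ (two_ne_zero : (2:ℝ) ≠ 0)]; simp
  have h2n : (0 : ℝ) < 2 ^ n := zpow_pos two_pos _
  have e : ((m j : ℝ)) * 2 ^ (-n) * 2 ^ n = (m j : ℝ) := by
    rw [mul_assoc, hpown, mul_one]
  have e2 : ((m j : ℝ) + 1) * 2 ^ (-n) * 2 ^ n = (m j : ℝ) + 1 := by
    rw [mul_assoc, hpown, mul_one]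
  have e3 : ((m j : ℝ) + 1/2) * 2 ^ (-n) * 2 ^ n = (m j : ℝ) + 1/2 := by
    rw [mul_assoc, hpown, mul_one]
  have hu1 : (m j : ℝ) ≤ 2 ^ n * x j := by
    have := mul_le_mul_of_nonneg_right (hx j).1 h2n.le
    rw [e] at this; linarith
  have hu2 : 2 ^ n * x j < (m j : ℝ) + 1 := by
    have := mul_lt_mul_of_pos_right (hx j).2 h2n
    rw [e2] at this; linarith
  have hv : 2 ^ n * c j = (m j : ℝ) + 1/2 := by
    rw [hc j]; linear_combination e3
  rw [hsplit (x j), hsplit (c j), floor_div_pow_eq hu1 hu2, hv]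
  exact (floor_div_pow_eq (p := m j) (by linarith) (by linarith)).symm

lemma ball_subset_cubeDil {d : ℕ} {n k : ℤ} (hk : n + 1 ≤ k) {m : Fin d → ℤ} {x : Euc d}
    (hx : x ∈ dyadicCube d n m) :
    ball x ((2 : ℝ) ^ (-k)) ⊆ cubeDil d 3 n m := by
  intro y hy j
  have hdist : |y j - x j| < (2 : ℝ) ^ (-k) := by
    have h1 : dist y x < (2 : ℝ) ^ (-k) := mem_ball.1 hy
    have h2 : |(y - x) j| ≤ ‖y - x‖ := coord_abs_le_norm _ _
    have h3 : (y - x) j = y j - x j := rfl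
    rw [dist_eq_norm] at h1
    rw [h3] at h2; linarith
  have hhalf : (2 : ℝ) ^ (-k) ≤ 2 ^ (-n) / 2 := by
    have h1 : (2 : ℝ) ^ (-k) ≤ 2 ^ (-(n+1)) := zpow_le_zpow_right₀ one_le_two (by linarith)
    have e : (2 : ℝ) ^ (-(n+1)) = 2 ^ (-n) / 2 := by
      rw [show -(n+1) = -n + (-1) by ring, zpow_add₀ (two_ne_zero : (2:ℝ) ≠ 0), zpow_neg_one]
      ring
    linarith
  have hxj := hx j
  have hp : (0 : ℝ) < 2 ^ (-n) := zpow_pos two_pos _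
  rw [abs_lt] at hdist
  constructor
  · push_cast
    linarith [hdist.1, hxj.1]
  · push_cast
    linarith [hdist.2, hxj.2]

lemma dyadicCube_subset_cubeDil {d : ℕ} {n k : ℤ} (hk : n ≤ k) {m : Fin d → ℤ} {x : Euc d}
    (hx : x ∈ dyadicCube d n m) :
    dyadicCube d k (dyadicIdx d k x) ⊆ cubeDil d 3 n m := by
  intro y hy j
  have hyj := hy j
  simp only [dyadicIdx] at hyj
  have hxj := hx j
  have hp : (0 : ℝ) < 2 ^ (-n) := zpow_pos two_pos _
  have hq : (0 : ℝ) < 2 ^ (-k) := zpow_pos two_pos _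
  have hqp : (2 : ℝ) ^ (-k) ≤ 2 ^ (-n) := zpow_le_zpow_right₀ one_le_two (by linarith)
  have hrk : (2 : ℝ) ^ k * 2 ^ (-k) = 1 := by
    rw [← zpow_add₀ (two_ne_zero : (2:ℝ) ≠ 0)]; simp
  set w : ℝ := (2 : ℝ) ^ k * x j with hw
  have hf1 : w - 1 < (⌊w⌋ : ℝ) := Int.sub_one_lt_floor _
  have hf2 : (⌊w⌋ : ℝ) ≤ w := Int.floor_le _
  have hxw : w * 2 ^ (-k) = x j := by
    rw [hw]; linear_combination x j * hrk
  have hint1 : (w - 1) * 2 ^ (-k) < (⌊w⌋ : ℝ) * 2 ^ (-k) := by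
    exact mul_lt_mul_of_pos_right hf1 hq
  have hint2 : ((⌊w⌋ : ℝ) + 1) * 2 ^ (-k) ≤ (w + 1) * 2 ^ (-k) := by
    apply mul_le_mul_of_nonneg_right _ hq.le
    linarith
  constructor
  · push_cast
    nlinarith [hyj.1, hint1, hxw, hxj.1, hqp, hp]
  · push_cast
    nlinarith [hyj.2, hint2, hxw, hxj.2, hqp, hp]

lemma measurableSet_cubeDil (d i : ℕ) (n : ℤ) (m : Fin d → ℤ) :
    MeasurableSet (cubeDil d i n m) := by
  have heq : cubeDil d i n m = ⋂ j, (fun y : Euc d => y j) ⁻¹'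
      (Set.Ico (((m j : ℝ) + 1 / 2) * 2 ^ (-n) - (i : ℝ) * 2 ^ (-n) / 2)
        (((m j : ℝ) + 1 / 2) * 2 ^ (-n) + (i : ℝ) * 2 ^ (-n) / 2)) := by
    ext y
    simp [cubeDil, Set.mem_iInter, Set.mem_Ico]
  rw [heq]
  exact MeasurableSet.iInter fun j => (by fun_prop : Continuous fun y : Euc d => y j).measurable measurableSet_Ico


/-- The square function of the differences `F_k(x) = T_k f₂(x) - T_k f₂(c_Q)` is uniformly
bounded on `Q` by `C_d ‖f‖_∞²`, where `f₂ = f 𝟙_{(3Q)ᶜ}` and `T_k = M_k - 𝖤_k`. -/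
theorem square_function_BMO_bound (d : ℕ) (hd : 0 < d) :
    ∃ C : ℝ, 0 < C ∧ ∀ (n : ℤ) (m : Fin d → ℤ) (f : Euc d → ℝ), MemLp f ∞ volume →
      ∀ (c : Euc d), (∀ j, c j = ((m j : ℝ) + 1 / 2) * 2 ^ (-n)) →
      ∀ x ∈ dyadicCube d n m,
        ∑' k : ℤ,
            ((Mk d k (((cubeDil d 3 n m)ᶜ).indicator f) x -
                Ek d k (((cubeDil d 3 n m)ᶜ).indicator f) x) -
              (Mk d k (((cubeDil d 3 n m)ᶜ).indicator f) c -
                Ek d k (((cubeDil d 3 n m)ᶜ).indicator f) c)) ^ 2 ≤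
          C * (eLpNorm f ∞ volume).toReal ^ 2 := by
  refine ⟨6 * (d : ℝ) ^ 3 + 1, by positivity, ?_⟩
  intro n m f hf c hc x hx
  set f₂ : Euc d → ℝ := ((cubeDil d 3 n m)ᶜ).indicator f with hf₂
  set M : ℝ := (eLpNorm f ∞ volume).toReal with hMdef
  have hM : 0 ≤ M := ENNReal.toReal_nonneg
  have hb : ∀ᵐ y, ‖f₂ y‖ ≤ M := by
    have h1 : ∀ᵐ y, (‖f y‖₊ : ENNReal) ≤ eLpNormEssSup f volume := ae_le_eLpNormEssSup
    have hne : eLpNormEssSup f volume ≠ ⊤ := by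
      rw [← eLpNorm_exponent_top]; exact hf.2.ne
    filter_upwards [h1] with y hy
    have h2 := ENNReal.toReal_mono hne hy
    simp only [ENNReal.coe_toReal, coe_nnnorm] at h2
    calc ‖f₂ y‖ ≤ ‖f y‖ := norm_indicator_le_norm_self _ _
      _ ≤ M := by rw [hMdef, eLpNorm_exponent_top]; exact h2
  have hmeas : AEStronglyMeasurable f₂ volume :=
    hf.1.indicator (measurableSet_cubeDil d 3 n m).compl
  have hcQ : c ∈ dyadicCube d n m := by
    simp only [dyadicCube, Set.mem_setOf_eq]
    intro j
    have hp : (0 : ℝ) < 2 ^ (-n) := zpow_pos two_pos _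
    rw [hc j]
    constructor <;> nlinarith [hp]
  have hcoord : ∀ j, |x j - c j| ≤ 2 ^ (-n) := by
    intro j
    have hp : (0 : ℝ) < 2 ^ (-n) := zpow_pos two_pos _
    have hxj := hx j
    rw [hc j, abs_le]
    constructor <;> nlinarith [hxj.1, hxj.2]
  have hnorm : ‖x - c‖ ≤ Real.sqrt d * 2 ^ (-n) := by
    have hp : (0 : ℝ) ≤ 2 ^ (-n) := (zpow_pos two_pos _).le
    rw [EuclideanSpace.norm_eq]
    have hsum : ∑ j, ‖(x - c) j‖ ^ 2 ≤ (d : ℝ) * ((2 : ℝ) ^ (-n)) ^ 2 := by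
      calc ∑ j, ‖(x - c) j‖ ^ 2 ≤ ∑ _j : Fin d, ((2 : ℝ) ^ (-n)) ^ 2 := by
            apply Finset.sum_le_sum
            intro j _
            rw [show ((x - c) j) = x j - c j from rfl, Real.norm_eq_abs]
            calc |x j - c j| ^ 2 = |x j - c j| ^ 2 := rfl
              _ ≤ ((2:ℝ) ^ (-n)) ^ 2 := pow_le_pow_left₀ (abs_nonneg _) (hcoord j) 2
        _ = (d : ℝ) * ((2 : ℝ) ^ (-n)) ^ 2 := by
            rw [Finset.sum_const, Finset.card_univ, Fintype.card_fin, nsmul_eq_mul]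
    calc Real.sqrt (∑ j, ‖(x - c) j‖ ^ 2) ≤ Real.sqrt ((d : ℝ) * ((2:ℝ) ^ (-n)) ^ 2) :=
          Real.sqrt_le_sqrt hsum
      _ = Real.sqrt d * 2 ^ (-n) := by
          rw [Real.sqrt_mul (Nat.cast_nonneg d), Real.sqrt_sq hp]
  -- vanishing for k > n
  have hMkzero : ∀ (k : ℤ) (z : Euc d), z ∈ dyadicCube d n m → n + 1 ≤ k →
      Mk d k f₂ z = 0 := by
    intro k z hz hk
    unfold Mk
    rw [setIntegral_eq_zero_of_forall_eq_zero, mul_zero]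
    intro y hy
    have hmem : y ∈ cubeDil d 3 n m := ball_subset_cubeDil hk hz hy
    exact Set.indicator_of_notMem (Set.notMem_compl_iff.mpr hmem) f
  have hEkzero : ∀ (k : ℤ) (z : Euc d), z ∈ dyadicCube d n m → n ≤ k →
      Ek d k f₂ z = 0 := by
    intro k z hz hk
    unfold Ek
    rw [setIntegral_eq_zero_of_forall_eq_zero, mul_zero]
    intro y hy
    have hmem : y ∈ cubeDil d 3 n m := dyadicCube_subset_cubeDil hk hz hy
    exact Set.indicator_of_notMem (Set.notMem_compl_iff.mpr hmem) f
  have hEkeq : ∀ k : ℤ, k ≤ n → Ek d k f₂ x = Ek d k f₂ c := by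
    intro k hk
    unfold Ek
    rw [dyadicIdx_eq_of_le hk hx hc]
  set G : ℤ → ℝ := fun k =>
      ((Mk d k f₂ x - Ek d k f₂ x) - (Mk d k f₂ c - Ek d k f₂ c)) ^ 2 with hG
  have hGnn : ∀ k, 0 ≤ G k := fun k => by simp only [hG]; exact sq_nonneg _
  have hGzero : ∀ k : ℤ, n < k → G k = 0 := by
    intro k hk
    have hk' : n + 1 ≤ k := hk
    simp only [hG]
    rw [hMkzero k x hx hk', hMkzero k c hcQ hk', hEkzero k x hx (by linarith),
      hEkzero k c hcQ (by linarith)]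
    ring
  set A : ℝ := (2 * (d : ℝ) * Real.sqrt d * M) ^ 2 with hAdef
  have hA : ∀ j : ℕ, G (n - j) ≤ A * (1 / 4 : ℝ) ^ j := by
    intro j
    have hk : (n - j : ℤ) ≤ n := by omega
    have hEk := hEkeq _ hk
    have hdiff := Mk_diff_bound hd f₂ hmeas hM hb (n - j) x c
    have h2 : (0:ℝ) < (2 : ℝ) ^ (n - (j:ℤ)) := zpow_pos two_pos _
    have e : (2 : ℝ) ^ (-n) * 2 ^ (n - (j:ℤ)) = (1 / 2 : ℝ) ^ j := by
      rw [← zpow_add₀ (two_ne_zero : (2:ℝ) ≠ 0),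
        show -n + (n - (j:ℤ)) = -(j:ℤ) by ring, zpow_neg, zpow_natCast, one_div, inv_pow]
    have hprod : ‖x - c‖ * 2 ^ (n - (j:ℤ)) ≤ Real.sqrt d * (1 / 2 : ℝ) ^ j := by
      have h3 := mul_le_mul_of_nonneg_right hnorm h2.le
      calc ‖x - c‖ * 2 ^ (n - (j:ℤ)) ≤ Real.sqrt d * 2 ^ (-n) * 2 ^ (n - (j:ℤ)) := h3
        _ = Real.sqrt d * ((2:ℝ) ^ (-n) * 2 ^ (n - (j:ℤ))) := by ring
        _ = Real.sqrt d * (1 / 2 : ℝ) ^ j := by rw [e]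
    have hstep : |Mk d (n - j) f₂ x - Mk d (n - j) f₂ c| ≤
        2 * (d : ℝ) * Real.sqrt d * M * (1 / 2 : ℝ) ^ j := by
      calc |Mk d (n - j) f₂ x - Mk d (n - j) f₂ c|
          ≤ 2 * (d : ℝ) * M * ‖x - c‖ * 2 ^ (n - (j:ℤ)) := hdiff
        _ = 2 * (d : ℝ) * M * (‖x - c‖ * 2 ^ (n - (j:ℤ))) := by ring
        _ ≤ 2 * (d : ℝ) * M * (Real.sqrt d * (1 / 2 : ℝ) ^ j) := by
            apply mul_le_mul_of_nonneg_left hprod (by positivity)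
        _ = 2 * (d : ℝ) * Real.sqrt d * M * (1 / 2 : ℝ) ^ j := by ring
    have hGval : G (n - j) = (Mk d (n - j) f₂ x - Mk d (n - j) f₂ c) ^ 2 := by
      simp only [hG]
      rw [hEk]; ring
    rw [hGval, ← sq_abs]
    calc |Mk d (n - j) f₂ x - Mk d (n - j) f₂ c| ^ 2
        ≤ (2 * (d : ℝ) * Real.sqrt d * M * (1 / 2 : ℝ) ^ j) ^ 2 :=
          pow_le_pow_left₀ (abs_nonneg _) hstep 2
      _ = (2 * (d : ℝ) * Real.sqrt d * M) ^ 2 * (((1 / 2 : ℝ)) ^ 2) ^ j := by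
          rw [mul_pow, ← pow_mul, mul_comm j 2, pow_mul]
      _ = A * (1 / 4 : ℝ) ^ j := by rw [hAdef]; norm_num
  have hgeo : Summable (fun j : ℕ => A * (1 / 4 : ℝ) ^ j) :=
    (summable_geometric_of_lt_one (by norm_num) (by norm_num)).mul_left A
  set e : ℕ → ℤ := fun j => n - j with he
  have hinj : Function.Injective e := by
    intro a b hab
    simp only [he] at hab
    omega
  have hcomp : Summable (G ∘ e) :=
    Summable.of_nonneg_of_le (fun j => hGnn _) (fun j => hA j) hgeo
  have hrange : ∀ k ∉ Set.range e, G k = 0 := by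
    intro k hk
    apply hGzero
    by_contra hcon
    push_neg at hcon
    exact hk ⟨(n - k).toNat, by simp only [he]; omega⟩
  have hsumG : Summable G := (hinj.summable_iff hrange).1 hcomp
  have htsum : ∑' k, G k = ∑' j, G (e j) :=
    (hinj.tsum_eq (Function.support_subset_iff'.2 hrange)).symm
  calc ∑' k, G k = ∑' j, G (e j) := htsum
    _ ≤ ∑' j : ℕ, A * (1 / 4 : ℝ) ^ j := Summable.tsum_le_tsum (fun j => hA j) hcomp hgeo
    _ = A * (1 - 1/4 : ℝ)⁻¹ := by
        rw [tsum_mul_left, tsum_geometric_of_lt_one (by norm_num) (by norm_num)]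
    _ ≤ (6 * (d : ℝ) ^ 3 + 1) * M ^ 2 := by
        have hsq : (Real.sqrt d) ^ 2 = (d : ℝ) := Real.sq_sqrt (Nat.cast_nonneg d)
        have hd3 : (0:ℝ) ≤ (d : ℝ) ^ 3 * M ^ 2 := by positivity
        have expand : A * (1 - 1/4 : ℝ)⁻¹ =
            (16/3 : ℝ) * ((d : ℝ) ^ 2 * (Real.sqrt d) ^ 2 * M ^ 2) := by
          rw [hAdef]; ring
        rw [expand, hsq]
        nlinarith [hd3, sq_nonneg M]
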